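/- Conversely, if p_1,...,p_n ∈ ℝ^{n-1} are the vertices of a regular (n-1)-dimensional simplex of edge length √2 with barycenter at the origin, then the n×n matrix A whose i-th row is (1/√n, p_i) is orthogonal. -/

import Mathlib

open Real Matrix

/-- If p₁,…,p_{n+1} ∈ ℝⁿ are the vertices of a regular n-simplex of edge length √2 with
barycenter at the origin, then the matrix whose i-th row is (1/√(n+1), pᵢ) is orthogonal. -/
theorem stmt1 (n : ℕ) (p : Fin (n + 1) → EuclideanSpace ℝ (Fin n))
    (hdist : ∀ i j, i ≠ j → dist (p i) (p j) = Real.sqrt 2)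
    (hsum : ∑ i, p i = 0)
    (A : Matrix (Fin (n + 1)) (Fin (n + 1)) ℝ)
    (hcol : ∀ i, A i 0 = 1 / Real.sqrt (n + 1))
    (hrow : ∀ i (j : Fin n), A i j.succ = p i j) :
    A ∈ Matrix.orthogonalGroup (Fin (n + 1)) ℝ := by
  have hn1 : (0:ℝ) < (n:ℝ) + 1 := by positivity
  set c : Fin (n+1) → ℝ := fun i => ‖p i‖^2 with hc
  have hd2 : ∀ i j, i ≠ j → c i + c j - 2 * inner ℝ (p i) (p j) = 2 := by
    intro i j hij
    have h := hdist i j hij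
    have h2 : dist (p i) (p j)^2 = 2 := by
      rw [h, Real.sq_sqrt (by norm_num)]
    rw [dist_eq_norm, norm_sub_sq_real] at h2
    simp only [hc]
    linarith
  have hinner_sum : ∀ i, ∑ j, (inner ℝ (p i) (p j) : ℝ) = 0 := by
    intro i
    have h : (inner ℝ (p i) (∑ j, p j) : ℝ) = 0 := by rw [hsum, inner_zero_right]
    rwa [inner_sum] at h
  set S : ℝ := ∑ j, c j with hS
  have hkey : ∀ i, ((n:ℝ) + 1) * c i = 2 * n - S := by
    intro i
    have h1 := hinner_sum i
    have h2 : ∑ j, (inner ℝ (p i) (p j) : ℝ)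
        = inner ℝ (p i) (p i) + ∑ j ∈ Finset.univ.erase i, (inner ℝ (p i) (p j) : ℝ) :=
      (Finset.add_sum_erase Finset.univ (fun j => (inner ℝ (p i) (p j) : ℝ))
        (Finset.mem_univ i)).symm
    have h3 : ∀ j ∈ Finset.univ.erase i, (inner ℝ (p i) (p j) : ℝ) = (c i + c j - 2)/2 := by
      intro j hj
      have hij : i ≠ j := (Finset.ne_of_mem_erase hj).symm
      have := hd2 i j hij
      linarith
    rw [Finset.sum_congr rfl h3] at h2
    have hii : (inner ℝ (p i) (p i) : ℝ) = c i := real_inner_self_eq_norm_sq (p i)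
    have hcard : (Finset.univ.erase i).card = n := by
      rw [Finset.card_erase_of_mem (Finset.mem_univ i), Finset.card_univ, Fintype.card_fin]
      omega
    have hsplit : ∑ j ∈ Finset.univ.erase i, ((c i + c j - 2)/2 : ℝ)
        = (S - c i)/2 + (n:ℝ) * ((c i - 2)/2) := by
      have he : ∀ j, (c i + c j - 2)/2 = c j / 2 + (c i - 2)/2 := fun j => by ring
      simp_rw [he]
      rw [Finset.sum_add_distrib, Finset.sum_const, hcard, ← Finset.sum_div,
        Finset.sum_erase_eq_sub (Finset.mem_univ i)]
      simp [nsmul_eq_mul, hS]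
    rw [hsplit, hii] at h2
    rw [h2] at h1
    linarith
  have hSn : S = n := by
    have h : S = ∑ j : Fin (n+1), ((2 * n - S) / ((n:ℝ) + 1)) := by
      rw [hS]
      apply Finset.sum_congr rfl
      intro j _
      have := hkey j
      field_simp
      linarith
    rw [Finset.sum_const, Finset.card_univ, Fintype.card_fin, nsmul_eq_mul] at h
    push_cast at h
    have h2 : ((n:ℝ)+1) * ((2*(n:ℝ) - S)/((n:ℝ)+1)) = 2*(n:ℝ) - S := by
      field_simp
    rw [h2] at h
    linarith
  have hcval : ∀ i, c i = n / ((n:ℝ)+1) := by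
    intro i
    have := hkey i
    rw [hSn] at this
    field_simp
    linarith
  have hipij : ∀ i j, i ≠ j → (inner ℝ (p i) (p j) : ℝ) = -1 / ((n:ℝ)+1) := by
    intro i j hij
    have := hd2 i j hij
    rw [hcval i, hcval j] at this
    field_simp at this ⊢
    linarith
  have hip : ∀ i j, (inner ℝ (p i) (p j) : ℝ) = ∑ k, p i k * p j k := by
    intro i j
    simp [PiLp.inner_apply, RCLike.inner_apply, mul_comm]
  rw [Matrix.mem_orthogonalGroup_iff]
  ext i j
  have hmul : (A * Aᵀ) i j = ∑ k, A i k * A j k := by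
    simp [Matrix.mul_apply, Matrix.transpose_apply]
  rw [hmul, Fin.sum_univ_succ]
  have hsq : (1 / Real.sqrt ((n:ℝ) + 1)) * (1 / Real.sqrt ((n:ℝ) + 1)) = 1 / ((n:ℝ)+1) := by
    rw [div_mul_div_comm, one_mul, Real.mul_self_sqrt (le_of_lt hn1)]
  have h0 : A i 0 * A j 0 = 1 / ((n:ℝ)+1) := by
    rw [hcol i, hcol j]; exact hsq
  have hrest : ∑ k : Fin n, A i k.succ * A j k.succ = (inner ℝ (p i) (p j) : ℝ) := by
    rw [hip]
    apply Finset.sum_congr rfl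
    intro k _
    rw [hrow, hrow]
  rw [h0, hrest]
  by_cases hij : i = j
  · subst hij
    rw [real_inner_self_eq_norm_sq, show ‖p i‖^2 = c i from rfl, hcval i,
      Matrix.one_apply_eq]
    field_simp
    ring
  · rw [hipij i j hij, Matrix.one_apply_ne hij]
    field_simp; ring
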